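/- Let G be a connected graph and F ⊂ ∇_G a subset of codimension 1 (dim conv(F) = N − 2 in the hyperplane of coordinate-sum-zero vectors) with 0 ∉ conv(F). If for every coherently oriented cycle O⃗ in G one has |E(G⃗_F) ∩ E(O⃗)| = |E(G⃗_F) ∩ E(−O⃗)|, then F is a facet of ∇_G. -/

import Mathlib

noncomputable def stdBasis {N : ℕ} (i : Fin N) : Fin N → ℝ := Pi.single i 1

def nabla {N : ℕ} (G : SimpleGraph (Fin N)) : Set (Fin N → ℝ) :=
  {x | ∃ i j, G.Adj i j ∧ x = stdBasis i - stdBasis j}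

noncomputable def inn {N : ℕ} (x α : Fin N → ℝ) : ℝ := ∑ i, x i * α i

def IsFace {N : ℕ} (G : SimpleGraph (Fin N)) (F : Set (Fin N → ℝ)) : Prop :=
  ∃ α : Fin N → ℝ, (∀ x ∈ nabla G, -1 ≤ inn x α) ∧
    F = {x | x ∈ nabla G ∧ inn x α = -1}

def IsFacet {N : ℕ} (G : SimpleGraph (Fin N)) (F : Set (Fin N → ℝ)) : Prop :=
  IsFace G F ∧ Module.finrank ℝ (vectorSpan ℝ F) = N - 2

def faceGraph {N : ℕ} (F : Set (Fin N → ℝ)) : SimpleGraph (Fin N) :=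
  SimpleGraph.fromRel (fun i j => stdBasis i - stdBasis j ∈ F)

def MaxBipartiteSubgraph {N : ℕ} (G H : SimpleGraph (Fin N)) : Prop :=
  H ≤ G ∧ H.Colorable 2 ∧ ∀ H', H' ≤ G → H'.Colorable 2 → H ≤ H' → H' = H

def inducedOn {N : ℕ} (G : SimpleGraph (Fin N)) (s : Set (Fin N)) : SimpleGraph (Fin N) where
  Adj i j := G.Adj i j ∧ i ∈ s ∧ j ∈ s
  symm := by constructor; intro i j h; exact ⟨h.1.symm, h.2.2, h.2.1⟩
  loopless := by constructor; intro i h; exact G.ne_of_adj h.1 rfl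


open SimpleGraph Walk

open Classical in
noncomputable def wF {N : ℕ} (F : Set (Fin N → ℝ)) (i j : Fin N) : ℝ :=
  if stdBasis i - stdBasis j ∈ F then 1 else if stdBasis j - stdBasis i ∈ F then -1 else 0

noncomputable def wwt {N : ℕ} (F : Set (Fin N → ℝ)) {G : SimpleGraph (Fin N)} {u v : Fin N}
    (p : G.Walk u v) : ℝ := (p.darts.map (fun d => wF F d.fst d.snd)).sum

lemma inn_sub {N : ℕ} (i j : Fin N) (α : Fin N → ℝ) :
    inn (stdBasis i - stdBasis j) α = α i - α j := by
  have h1 : ∀ k : Fin N, (stdBasis i - stdBasis j) k * α k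
      = (if k = i then α k else 0) - (if k = j then α k else 0) := by
    intro k
    simp [stdBasis, Pi.single_apply, sub_mul, ite_mul]
  unfold inn
  simp only [h1, Finset.sum_sub_distrib, Finset.sum_ite_eq' Finset.univ,
    Finset.mem_univ, if_true]

lemma noboth {N : ℕ} {F : Set (Fin N → ℝ)} (h0 : (0 : Fin N → ℝ) ∉ convexHull ℝ F)
    {i j : Fin N} (h1 : stdBasis i - stdBasis j ∈ F) : stdBasis j - stdBasis i ∉ F := by
  intro h2
  apply h0
  have : (0 : Fin N → ℝ) = (1/2 : ℝ) • (stdBasis i - stdBasis j)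
      + (1/2 : ℝ) • (stdBasis j - stdBasis i) := by
    module
  rw [this]
  exact (convex_convexHull ℝ F) (subset_convexHull ℝ F h1) (subset_convexHull ℝ F h2)
    (by norm_num) (by norm_num) (by norm_num)

lemma wF_antisymm {N : ℕ} {F : Set (Fin N → ℝ)} (h0 : (0 : Fin N → ℝ) ∉ convexHull ℝ F)
    (i j : Fin N) : wF F j i = - wF F i j := by
  unfold wF
  by_cases h1 : stdBasis i - stdBasis j ∈ F
  · rw [if_neg (noboth h0 h1), if_pos h1, if_pos h1]
  · by_cases h2 : stdBasis j - stdBasis i ∈ F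
    · rw [if_pos h2, if_neg h1, if_pos h2]; norm_num
    · rw [if_neg h2, if_neg h1, if_neg h2, if_neg h1, neg_zero]

lemma wF_le_one {N : ℕ} (F : Set (Fin N → ℝ)) (i j : Fin N) : wF F i j ≤ 1 := by
  unfold wF
  split <;> [skip; split] <;> norm_num

@[simp] lemma wwt_nil {N : ℕ} (F : Set (Fin N → ℝ)) {G : SimpleGraph (Fin N)} {u : Fin N} :
    wwt F (Walk.nil : G.Walk u u) = 0 := by simp [wwt]

@[simp] lemma wwt_cons {N : ℕ} (F : Set (Fin N → ℝ)) {G : SimpleGraph (Fin N)} {u v w : Fin N}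
    (h : G.Adj u v) (p : G.Walk v w) : wwt F (Walk.cons h p) = wF F u v + wwt F p := by
  unfold wwt
  rw [darts_cons, List.map_cons, List.sum_cons]

lemma wwt_append {N : ℕ} (F : Set (Fin N → ℝ)) {G : SimpleGraph (Fin N)} {u v w : Fin N}
    (p : G.Walk u v) (q : G.Walk v w) : wwt F (p.append q) = wwt F p + wwt F q := by
  unfold wwt
  rw [darts_append, List.map_append, List.sum_append]

lemma wwt_reverse {N : ℕ} {F : Set (Fin N → ℝ)} (h0 : (0 : Fin N → ℝ) ∉ convexHull ℝ F)
    {G : SimpleGraph (Fin N)} {u v : Fin N} (p : G.Walk u v) :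
    wwt F p.reverse = - wwt F p := by
  unfold wwt
  rw [darts_reverse, List.map_reverse, List.sum_reverse, List.map_map]
  have : ((fun d : G.Dart => wF F d.fst d.snd) ∘ Dart.symm)
      = fun d : G.Dart => - wF F d.fst d.snd := by
    funext d
    exact wF_antisymm h0 d.fst d.snd
  rw [this]
  induction p.darts with
  | nil => simp
  | cons a l ih => simp [ih]; ring

lemma wwt_eq_sum {N : ℕ} (F : Set (Fin N → ℝ)) {G : SimpleGraph (Fin N)} {u v : Fin N}
    (p : G.Walk u v) :
    wwt F p = ∑ r : Fin p.length, wF F (p.getVert r) (p.getVert (r + 1)) := by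
  induction p with
  | nil => rw [wwt_nil]; exact (Fin.sum_univ_zero _).symm
  | cons h q ih =>
    rw [wwt_cons, ih]
    rw [show (Walk.cons h q).length = q.length + 1 from rfl, Fin.sum_univ_succ]
    congr 1
    have : ((0 : Fin (q.length + 1)) : ℕ) = 0 := rfl
    rw [this, getVert_cons_succ, getVert_zero, getVert_zero]

lemma wwt_cycle_zero {N : ℕ} {F : Set (Fin N → ℝ)} (h0 : (0 : Fin N → ℝ) ∉ convexHull ℝ F)
    {G : SimpleGraph (Fin N)} {v : Fin N} (c : G.Walk v v)
    (hbal : Nat.card {r : Fin c.length //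
          stdBasis (c.getVert (r : ℕ)) - stdBasis (c.getVert ((r : ℕ) + 1)) ∈ F} =
      Nat.card {r : Fin c.length //
          stdBasis (c.getVert ((r : ℕ) + 1)) - stdBasis (c.getVert (r : ℕ)) ∈ F}) :
    wwt F c = 0 := by
  classical
  rw [wwt_eq_sum]
  have hterm : ∀ r : Fin c.length, wF F (c.getVert r) (c.getVert (r + 1))
      = (if stdBasis (c.getVert (r : ℕ)) - stdBasis (c.getVert ((r : ℕ) + 1)) ∈ F
          then (1:ℝ) else 0)
        + (if stdBasis (c.getVert ((r : ℕ) + 1)) - stdBasis (c.getVert (r : ℕ)) ∈ F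
          then (-1:ℝ) else 0) := by
    intro r
    by_cases hp : stdBasis (c.getVert (r : ℕ)) - stdBasis (c.getVert ((r : ℕ) + 1)) ∈ F
    · have hq := noboth h0 hp
      simp [wF, hp, hq]
    · by_cases hq : stdBasis (c.getVert ((r : ℕ) + 1)) - stdBasis (c.getVert (r : ℕ)) ∈ F
      · simp [wF, hp, hq]
      · simp [wF, hp, hq]
  rw [Finset.sum_congr rfl (fun r _ => hterm r), Finset.sum_add_distrib]
  have e1 : (∑ r : Fin c.length,
      if stdBasis (c.getVert (r : ℕ)) - stdBasis (c.getVert ((r : ℕ) + 1)) ∈ F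
        then (1:ℝ) else 0)
      = (Nat.card {r : Fin c.length //
          stdBasis (c.getVert (r : ℕ)) - stdBasis (c.getVert ((r : ℕ) + 1)) ∈ F} : ℝ) := by
    rw [Finset.sum_boole, Nat.card_eq_fintype_card, Fintype.card_subtype]
  have e2 : (∑ r : Fin c.length,
      if stdBasis (c.getVert ((r : ℕ) + 1)) - stdBasis (c.getVert (r : ℕ)) ∈ F
        then (-1:ℝ) else 0)
      = -(Nat.card {r : Fin c.length //
          stdBasis (c.getVert ((r : ℕ) + 1)) - stdBasis (c.getVert (r : ℕ)) ∈ F} : ℝ) := by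
    have h3 : ∀ r : Fin c.length,
        (if stdBasis (c.getVert ((r : ℕ) + 1)) - stdBasis (c.getVert (r : ℕ)) ∈ F
          then (-1:ℝ) else 0)
        = -(if stdBasis (c.getVert ((r : ℕ) + 1)) - stdBasis (c.getVert (r : ℕ)) ∈ F
          then (1:ℝ) else 0) := by
      intro r; split <;> simp
    rw [Finset.sum_congr rfl (fun r _ => h3 r), Finset.sum_neg_distrib,
      Finset.sum_boole, Nat.card_eq_fintype_card, Fintype.card_subtype]
  rw [e1, e2, hbal]
  ring

lemma path_loop_edge {V : Type*} {G : SimpleGraph V} {x v : V} (p : G.Walk x v)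
    (hp : p.IsPath) (he : s(v, x) ∈ p.edges) :
    ∃ (h : G.Adj x v), p = Walk.cons h Walk.nil := by
  cases p with
  | nil => simp at he
  | @cons _ y _ h q =>
    rw [edges_cons, List.mem_cons] at he
    rw [Walk.cons_isPath_iff] at hp
    rcases he with heq | hin
    · rw [Sym2.eq_iff] at heq
      have hyv : y = v := by
        rcases heq with ⟨h1, h2⟩ | ⟨h1, h2⟩
        · exact absurd h2 h.ne
        · exact h1.symm
      subst hyv
      have : q = Walk.nil := Walk.isPath_iff_eq_nil.mp hp.1
      subst this
      exact ⟨h, rfl⟩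
    · exact absurd (Walk.snd_mem_support_of_mem_edges q hin) hp.2

lemma wwt_closed_aux {N : ℕ} {F : Set (Fin N → ℝ)} (h0 : (0 : Fin N → ℝ) ∉ convexHull ℝ F)
    {G : SimpleGraph (Fin N)}
    (hbal : ∀ (v : Fin N) (c : G.Walk v v), c.IsCycle → wwt F c = 0) :
    ∀ (n : ℕ) (v : Fin N) (p : G.Walk v v), p.length ≤ n → wwt F p = 0 := by
  classical
  intro n
  induction n with
  | zero =>
    intro v p hl
    cases p with
    | nil => simp
    | cons h q => simp [Walk.length_cons] at hl
  | succ n ih =>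
    intro v p hl
    by_cases hnil : p.Nil
    · cases hnil.eq_nil; simp
    by_cases hnd : p.support.tail.Nodup
    · -- p = cons h p'
      obtain ⟨x, hadj, p', rfl⟩ := (Walk.not_nil_iff).mp hnil
      have hp'path : p'.IsPath := by
        rw [Walk.isPath_def]
        simpa using hnd
      by_cases he : s(v, x) ∈ p'.edges
      · obtain ⟨h', rfl⟩ := path_loop_edge p' hp'path he
        rw [wwt_cons, wwt_cons, wwt_nil, add_zero, wF_antisymm h0]
        ring
      · exact hbal v _ ((Walk.cons_isCycle_iff p' hadj).mpr ⟨hp'path, he⟩)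
    · -- duplicate vertex in the interior: split
      obtain ⟨u, hdup⟩ := List.exists_duplicate_iff_not_nodup.mpr hnd
      have hcnt : 2 ≤ p.support.tail.count u := List.duplicate_iff_two_le_count.mp hdup
      have humem : u ∈ p.support := by
        rw [p.support_eq_cons]
        exact List.mem_cons_of_mem _ (List.count_pos_iff.mp (by omega))
      set q := p.rotate u humem with hq
      have hwq : wwt F q = wwt F p := by
        unfold wwt
        exact (((p.rotate_darts u humem).map _).perm).sum_eq
      have hqcnt : 2 ≤ q.support.tail.count u := by
        rw [((p.support_rotate u humem).perm).count_eq]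
        exact hcnt
      have hqnil : ¬ q.Nil := by
        intro hn
        rw [Walk.nil_iff_length_eq] at hn
        have h1 : q.support.tail.length = q.length := by
          rw [List.length_tail, Walk.length_support]; omega
        have h2 := List.count_le_length (a := u) (l := q.support.tail)
        omega
      obtain ⟨y, hadj2, q'', hq''⟩ := (Walk.not_nil_iff).mp hqnil
      have hcnt'' : 2 ≤ q''.support.count u := by
        have : q.support.tail = q''.support := by rw [hq'', Walk.support_cons]; rfl
        rwa [this] at hqcnt
      have humem'' : u ∈ q''.support := List.count_pos_iff.mp (by omega)
      set t := q''.takeUntil u humem'' with ht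
      set d := q''.dropUntil u humem'' with hd
      have hspec : t.append d = q'' := q''.take_spec humem''
      have hlen'' : t.length + d.length = q''.length := by
        rw [← Walk.length_append, hspec]
      have hcntt : t.support.count u = 1 := q''.count_support_takeUntil_eq_one humem''
      have hdsup : 1 ≤ d.support.tail.count u := by
        have : q''.support.count u = t.support.count u + d.support.tail.count u := by
          rw [← hspec, Walk.support_append, List.count_append]
        omega
      have hdnil : 1 ≤ d.length := by
        have h1 : d.support.tail.length = d.length := by
          rw [List.length_tail, Walk.length_support]; omega
        have h2 : 0 < d.support.tail.length := by
          have := List.count_le_length (a := u) (l := d.support.tail)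
          omega
        omega
      have hqlen : q.length = p.length := by
        have h1 : (p.takeUntil u humem).length + (p.dropUntil u humem).length = p.length := by
          rw [← Walk.length_append, p.take_spec humem]
        have h2 : q.length = (p.dropUntil u humem).length + (p.takeUntil u humem).length := by
          rw [hq, Walk.rotate, Walk.length_append]
        omega
      have hq''len : q''.length + 1 = q.length := by
        rw [hq'', Walk.length_cons]
      have hplen : 1 ≤ p.length := by
        have := Walk.not_nil_iff_lt_length.mp hnil
        omega
      -- q = (cons hadj2 t) ++ d
      have hsplit : q = (Walk.cons hadj2 t).append d := by
        rw [hq'', ← hspec, Walk.cons_append]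
      have h1 : wwt F (Walk.cons hadj2 t) = 0 := by
        apply ih u (Walk.cons hadj2 t)
        rw [Walk.length_cons]
        omega
      have h2 : wwt F d = 0 := by
        apply ih u d
        omega
      rw [← hwq, hsplit, wwt_append, h1, h2, add_zero]

theorem stmt11' {N : ℕ} (G : SimpleGraph (Fin N)) (hG : G.Connected)
    (F : Set (Fin N → ℝ)) (hFsub : F ⊆ nabla G)
    (hdim : Module.finrank ℝ (vectorSpan ℝ F) = N - 2)
    (h0 : (0 : Fin N → ℝ) ∉ convexHull ℝ F)
    (hbal : ∀ (v : Fin N) (c : G.Walk v v), c.IsCycle →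
      Nat.card {r : Fin c.length //
          stdBasis (c.getVert (r : ℕ)) - stdBasis (c.getVert ((r : ℕ) + 1)) ∈ F} =
      Nat.card {r : Fin c.length //
          stdBasis (c.getVert ((r : ℕ) + 1)) - stdBasis (c.getVert (r : ℕ)) ∈ F}) :
    (∃ α : Fin N → ℝ, (∀ x ∈ nabla G, -1 ≤ inn x α) ∧
      F = {x | x ∈ nabla G ∧ inn x α = -1}) := by
  classical
  have hbal' : ∀ (v : Fin N) (c : G.Walk v v), c.IsCycle → wwt F c = 0 :=
    fun v c hc => wwt_cycle_zero h0 c (hbal v c hc)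
  have hclosed : ∀ (v : Fin N) (p : G.Walk v v), wwt F p = 0 :=
    fun v p => wwt_closed_aux h0 hbal' p.length v p le_rfl
  obtain ⟨v0⟩ := hG.nonempty
  have hkey : ∀ i j : Fin N, G.Adj i j →
      wwt F ((hG.preconnected v0 i).some) - wwt F ((hG.preconnected v0 j).some)
        = - wF F i j := by
    intro i j hij
    have hC := hclosed v0 ((((hG.preconnected v0 i).some).append
      (Walk.cons hij Walk.nil)).append (((hG.preconnected v0 j).some).reverse))
    rw [wwt_append, wwt_append, wwt_cons, wwt_nil, wwt_reverse h0] at hC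
    linarith
  refine ⟨fun u => wwt F ((hG.preconnected v0 u).some), ?_, ?_⟩
  · rintro x ⟨i, j, hij, rfl⟩
    rw [inn_sub, hkey i j hij]
    have := wF_le_one F i j
    linarith
  · ext x
    constructor
    · intro hx
      obtain ⟨i, j, hij, hxe⟩ := hFsub hx
      subst hxe
      refine ⟨⟨i, j, hij, rfl⟩, ?_⟩
      rw [inn_sub, hkey i j hij]
      have h1 : wF F i j = 1 := by unfold wF; rw [if_pos hx]
      rw [h1]
    · rintro ⟨⟨i, j, hij, rfl⟩, hinn⟩
      rw [inn_sub, hkey i j hij] at hinn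
      have h1 : wF F i j = 1 := by linarith
      unfold wF at h1
      by_cases hp : stdBasis i - stdBasis j ∈ F
      · exact hp
      · rw [if_neg hp] at h1
        by_cases hq : stdBasis j - stdBasis i ∈ F
        · rw [if_pos hq] at h1; norm_num at h1
        · rw [if_neg hq] at h1; norm_num at h1

theorem stmt11 {N : ℕ} (G : SimpleGraph (Fin N)) (hG : G.Connected)
    (F : Set (Fin N → ℝ)) (hFsub : F ⊆ nabla G)
    (hdim : Module.finrank ℝ (vectorSpan ℝ F) = N - 2)
    (h0 : (0 : Fin N → ℝ) ∉ convexHull ℝ F)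
    (hbal : ∀ (v : Fin N) (c : G.Walk v v), c.IsCycle →
      Nat.card {r : Fin c.length //
          stdBasis (c.getVert (r : ℕ)) - stdBasis (c.getVert ((r : ℕ) + 1)) ∈ F} =
      Nat.card {r : Fin c.length //
          stdBasis (c.getVert ((r : ℕ) + 1)) - stdBasis (c.getVert (r : ℕ)) ∈ F}) :
    IsFacet G F :=
  ⟨stmt11' G hG F hFsub hdim h0 hbal, hdim⟩
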